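/- Let F be a monotone submodular function with F(∅)=0 on subsets of a finite set Ω with cardinality constraint k. If the greedy algorithm builds sets ∅ = G_0 ⊆ G_1 ⊆ ... ⊆ G_k by at each step adding an element maximizing the marginal gain, then F(G_k) ≥ (1 − (1 − 1/k)^k) · max_{|S| ≤ k} F(S) ≥ (1 − e^{-1}) · max_{|S| ≤ k} F(S). -/

import Mathlib

lemma submod_union_sum {Ω : Type*} [DecidableEq Ω] (F : Finset Ω → ℝ)
    (hsub : ∀ A B : Finset Ω, F (A ∪ B) + F (A ∩ B) ≤ F A + F B)
    (hmono : ∀ A B : Finset Ω, A ⊆ B → F A ≤ F B) :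
    ∀ (T A : Finset Ω), F (A ∪ T) - F A ≤ ∑ y ∈ T, (F (insert y A) - F A) := by
  intro T
  induction T using Finset.induction_on with
  | empty => intro A; simp
  | @insert z T' hz ih =>
    intro A
    rw [Finset.sum_insert hz]
    by_cases hzA : z ∈ A
    · have h1 : A ∪ insert z T' = A ∪ T' := by
        rw [Finset.union_insert, Finset.insert_eq_self.mpr (Finset.mem_union_left _ hzA)]
      have h2 : insert z A = A := Finset.insert_eq_self.mpr hzA
      rw [h1, h2]
      have := ih A
      linarith
    · have h1 : A ∪ insert z T' = insert z A ∪ (A ∪ T') := by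
        ext a; simp
      have h2 : insert z A ∩ (A ∪ T') = A := by
        ext a
        simp only [Finset.mem_inter, Finset.mem_insert, Finset.mem_union]
        constructor
        · rintro ⟨h3 | h3, h4 | h4⟩ <;> first | exact h4 | exact h3 | (exfalso; subst h3; tauto)
        · tauto
      have := hsub (insert z A) (A ∪ T')
      rw [← h1, h2] at this
      have := ih A
      linarith

/-- Nemhauser–Wolsey–Fisher greedy guarantee under a cardinality constraint. -/
theorem greedy_cardinality_guarantee {Ω : Type*} [Fintype Ω] [DecidableEq Ω] [Nonempty Ω]
    (F : Finset Ω → ℝ)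
    (hsub : ∀ A B : Finset Ω, F (A ∪ B) + F (A ∩ B) ≤ F A + F B)
    (hmono : ∀ A B : Finset Ω, A ⊆ B → F A ≤ F B)
    (hempty : F ∅ = 0)
    (k : ℕ) (hk : 1 ≤ k)
    (G : ℕ → Finset Ω) (x : ℕ → Ω)
    (hG0 : G 0 = ∅)
    (hGstep : ∀ i, 1 ≤ i → i ≤ k → G i = insert (x i) (G (i - 1)))
    (hgreedy : ∀ i, 1 ≤ i → i ≤ k → ∀ y : Ω,
      F (insert y (G (i - 1))) - F (G (i - 1)) ≤
        F (insert (x i) (G (i - 1))) - F (G (i - 1))) :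
    ∀ S : Finset Ω, S.card ≤ k →
      F (G k) ≥ (1 - (1 - 1 / (k : ℝ)) ^ k) * F S ∧
      (1 - (1 - 1 / (k : ℝ)) ^ k) * F S ≥ (1 - Real.exp (-1)) * F S := by
  intro S hS
  have hkR : (1:ℝ) ≤ (k:ℝ) := by exact_mod_cast hk
  have hkpos : (0:ℝ) < (k:ℝ) := lt_of_lt_of_le one_pos hkR
  set c : ℝ := 1 - 1 / (k:ℝ) with hc
  have hc0 : 0 ≤ c := by
    rw [hc]
    have : 1 / (k:ℝ) ≤ 1 := by
      rw [div_le_one hkpos]; exact hkR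
    linarith
  have hFS0 : 0 ≤ F S := by
    have := hmono ∅ S (Finset.empty_subset S)
    linarith
  -- main induction
  have key : ∀ i, i ≤ k → F S - F (G i) ≤ c ^ i * F S := by
    intro i
    induction i with
    | zero => intro _; simp [hG0, hempty]
    | succ i ih =>
      intro hik
      have hik' : i ≤ k := Nat.le_of_succ_le hik
      have hδi := ih hik'
      -- step inequality
      have hG' : G (i+1) = insert (x (i+1)) (G i) := by
        have := hGstep (i+1) (Nat.le_add_left 1 i) hik
        simpa using this
      have hgnn : 0 ≤ F (G (i+1)) - F (G i) := by
        rw [hG']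
        have := hmono (G i) (insert (x (i+1)) (G i)) (Finset.subset_insert _ _)
        linarith
      have hstep : F S - F (G i) ≤ (k:ℝ) * (F (G (i+1)) - F (G i)) := by
        have h1 : F S ≤ F (G i ∪ S) := hmono S _ Finset.subset_union_right
        have h2 := submod_union_sum F hsub hmono S (G i)
        have h3 : ∑ y ∈ S, (F (insert y (G i)) - F (G i)) ≤
            ∑ _y ∈ S, (F (G (i+1)) - F (G i)) := by
          apply Finset.sum_le_sum
          intro y _
          have := hgreedy (i+1) (Nat.le_add_left 1 i) hik y
          simp only [Nat.add_sub_cancel] at this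
          rw [hG']
          linarith
        rw [Finset.sum_const, nsmul_eq_mul] at h3
        have h4 : (S.card : ℝ) * (F (G (i+1)) - F (G i)) ≤
            (k:ℝ) * (F (G (i+1)) - F (G i)) := by
          apply mul_le_mul_of_nonneg_right _ hgnn
          exact_mod_cast hS
        linarith
      have hdiv : (F S - F (G i)) / (k:ℝ) ≤ F (G (i+1)) - F (G i) :=
        (div_le_iff₀ hkpos).mpr (by linarith [hstep, mul_comm (F (G (i+1)) - F (G i)) (k:ℝ)])
      have hcontr : F S - F (G (i+1)) ≤ c * (F S - F (G i)) := by
        have hcd : c * (F S - F (G i)) = (F S - F (G i)) - (F S - F (G i)) / (k:ℝ) := by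
          rw [hc]
          field_simp
        rw [hcd]
        linarith
      calc F S - F (G (i+1)) ≤ c * (F S - F (G i)) := hcontr
        _ ≤ c * (c ^ i * F S) := mul_le_mul_of_nonneg_left hδi hc0
        _ = c ^ (i+1) * F S := by ring
  have hmain := key k le_rfl
  constructor
  · have : (1 - c ^ k) * F S = F S - c ^ k * F S := by ring
    rw [hc] at *
    linarith [hmain]
  · -- (1 - c^k) ≥ 1 - exp(-1)
    have h1 : c ≤ Real.exp (-(1/(k:ℝ))) := by
      have := Real.add_one_le_exp (-(1/(k:ℝ)))
      linarith
    have h2 : c ^ k ≤ (Real.exp (-(1/(k:ℝ)))) ^ k := pow_le_pow_left₀ hc0 h1 k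
    have h3 : (Real.exp (-(1/(k:ℝ)))) ^ k = Real.exp (-1) := by
      rw [← Real.exp_nat_mul]
      congr 1
      field_simp
    have h4 : c ^ k ≤ Real.exp (-1) := by rw [← h3]; exact h2
    have : (1 - Real.exp (-1)) ≤ 1 - c ^ k := by linarith
    exact mul_le_mul_of_nonneg_right this hFS0
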